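/- arXiv:1410.0215 — 2 statements merged into one kernel-verified Lean document; each statement's English description precedes it below -/
import Mathlib

section
/- With K, τ², A = K + τ²I, σ², 𝟙, e_i as in the nugget variance theorem, the predictive variance s²_i = σ²(τ² - τ⁴ e_iᵀ A⁻¹ e_i + τ⁴ (e_iᵀ A⁻¹ 𝟙)²/(𝟙ᵀ A⁻¹ 𝟙)) satisfies 0 ≤ s²_i ≤ 2σ²τ². Moreover s²_i ≥ σ²(τ² - τ⁴ e_iᵀ A⁻¹ e_i) ≥ 0. -/
open Matrix

lemma psd_cauchy_schwarz {n : ℕ} {B : Matrix (Fin n) (Fin n) ℝ} (hB : B.PosSemidef)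
    (u v : Fin n → ℝ) :
    (u ⬝ᵥ B.mulVec v) ^ 2 ≤ (u ⬝ᵥ B.mulVec u) * (v ⬝ᵥ B.mulVec v) := by
  obtain ⟨C, rfl⟩ : ∃ C : Matrix (Fin n) (Fin n) ℝ, B = Cᴴ * C := by
    open scoped MatrixOrder in exact CStarAlgebra.nonneg_iff_eq_star_mul_self.mp hB.nonneg
  have h : ∀ x y : Fin n → ℝ, x ⬝ᵥ (Cᴴ * C).mulVec y = (C.mulVec x) ⬝ᵥ (C.mulVec y) := by
    intro x y
    rw [← Matrix.mulVec_mulVec, Matrix.dotProduct_mulVec,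
      Matrix.conjTranspose_eq_transpose_of_trivial, Matrix.vecMul_transpose]
  rw [h, h, h]
  simpa [dotProduct, pow_two] using
    Finset.sum_mul_sq_le_sq_mul_sq Finset.univ (C.mulVec u) (C.mulVec v)

theorem stmt_4 (n : ℕ) (K : Matrix (Fin n) (Fin n) ℝ) (hK : K.PosSemidef)
    (hdiag : ∀ i, K i i = 1) (τ2 σ2 : ℝ) (hτ : 0 < τ2) (hσ : 0 < σ2) (i : Fin n)
    (A : Matrix (Fin n) (Fin n) ℝ) (hA : A = K + τ2 • (1 : Matrix (Fin n) (Fin n) ℝ))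
    (one : Fin n → ℝ) (hone : one = fun _ => 1)
    (s2 : ℝ)
    (hs2 : s2 = σ2 * (τ2 - τ2 ^ 2 * ((Pi.single i 1 : Fin n → ℝ) ⬝ᵥ A⁻¹.mulVec (Pi.single i 1)) +
        τ2 ^ 2 * ((Pi.single i 1 : Fin n → ℝ) ⬝ᵥ A⁻¹.mulVec one) ^ 2 /
          (one ⬝ᵥ A⁻¹.mulVec one))) :
    (0 ≤ s2 ∧ s2 ≤ 2 * σ2 * τ2) ∧
    σ2 * (τ2 - τ2 ^ 2 * ((Pi.single i 1 : Fin n → ℝ) ⬝ᵥ A⁻¹.mulVec (Pi.single i 1))) ≤ s2 ∧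
    0 ≤ σ2 * (τ2 - τ2 ^ 2 * ((Pi.single i 1 : Fin n → ℝ) ⬝ᵥ A⁻¹.mulVec (Pi.single i 1))) := by
  subst hs2
  have hApd : A.PosDef := by
    rw [hA]
    refine Matrix.PosDef.posSemidef_add hK ?_
    rw [Matrix.smul_one_eq_diagonal]
    exact Matrix.PosDef.diagonal fun _ => hτ
  have hB : A⁻¹.PosDef := hApd.inv
  set e : Fin n → ℝ := Pi.single i 1 with he
  set q : ℝ := e ⬝ᵥ A⁻¹.mulVec e with hq
  set p : ℝ := e ⬝ᵥ A⁻¹.mulVec one with hp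
  set d : ℝ := one ⬝ᵥ A⁻¹.mulVec one with hd
  have hq0 : 0 ≤ q := by simpa using hB.posSemidef.dotProduct_mulVec_nonneg e
  have hd0 : 0 ≤ d := by simpa using hB.posSemidef.dotProduct_mulVec_nonneg one
  -- τ2 * q ≤ 1
  set y : Fin n → ℝ := A⁻¹.mulVec e with hy
  have hAy : A.mulVec y = e := by
    rw [hy, Matrix.mulVec_mulVec, Matrix.mul_nonsing_inv A
      (isUnit_iff_ne_zero.mpr hApd.det_pos.ne'), Matrix.one_mulVec]
  have h1 : q = y ⬝ᵥ A.mulVec y := by rw [hAy, hq, dotProduct_comm]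
  have h2 : τ2 * (y ⬝ᵥ y) ≤ y ⬝ᵥ A.mulVec y := by
    have hKy : 0 ≤ y ⬝ᵥ K.mulVec y := by simpa using hK.dotProduct_mulVec_nonneg y
    rw [hA, Matrix.add_mulVec, dotProduct_add, Matrix.smul_mulVec,
      Matrix.one_mulVec, dotProduct_smul]
    simp only [smul_eq_mul]
    linarith
  have h3 : q ^ 2 ≤ y ⬝ᵥ y := by
    have hqy : q = y i := by
      rw [hq, he, single_dotProduct, one_mul]
    have : y i ^ 2 ≤ ∑ j, y j ^ 2 :=
      Finset.single_le_sum (fun j _ => sq_nonneg (y j)) (Finset.mem_univ i)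
    rw [hqy]
    simpa [dotProduct, pow_two] using this
  have h4 : τ2 * q ^ 2 ≤ q := by nlinarith [mul_le_mul_of_nonneg_left h3 hτ.le]
  have h5 : τ2 * q ≤ 1 := by nlinarith [h4, hq0, hτ, sq_nonneg (τ2 * q - 1), mul_le_mul_of_nonneg_left h4 hτ.le]
  have hτq : τ2 ^ 2 * q ≤ τ2 := by nlinarith [h5, hτ]
  -- correction term bounds
  have hCS : p ^ 2 ≤ q * d := psd_cauchy_schwarz hB.posSemidef e one
  have hc0 : 0 ≤ τ2 ^ 2 * p ^ 2 / d := by positivity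
  have hcq : τ2 ^ 2 * p ^ 2 / d ≤ τ2 ^ 2 * q := by
    rcases eq_or_lt_of_le hd0 with h | h
    · have hp0 : p ^ 2 ≤ 0 := by nlinarith
      have : p = 0 := by nlinarith [sq_nonneg p]
      simp [this]
      positivity
    · rw [div_le_iff₀ h]
      nlinarith [sq_nonneg τ2]
  have hL : 0 ≤ τ2 - τ2 ^ 2 * q := by linarith
  have hU : τ2 - τ2 ^ 2 * q + τ2 ^ 2 * p ^ 2 / d ≤ 2 * τ2 := by linarith
  refine ⟨⟨mul_nonneg hσ.le (by linarith), ?_⟩, ?_, ?_⟩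
  · nlinarith [mul_le_mul_of_nonneg_left hU hσ.le]
  · exact mul_le_mul_of_nonneg_left (by linarith) hσ.le
  · exact mul_nonneg hσ.le hL
end

section
/- (Large-nugget limit of predictive variance.) With A(τ²) = K + τ²I for K an n×n symmetric positive semidefinite matrix with unit diagonal, the expression s²(τ²)/σ² = τ² - τ⁴ e_iᵀ A(τ²)⁻¹ e_i + τ⁴ (e_iᵀ A(τ²)⁻¹ 𝟙)²/(𝟙ᵀ A(τ²)⁻¹ 𝟙) satisfies s²(τ²)/(σ²τ²) → 1/n as τ² → ∞. -/
open Matrix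

lemma aux_posdef {n : ℕ} {K : Matrix (Fin n) (Fin n) ℝ} (hK : K.PosSemidef)
    {t : ℝ} (ht : 0 ≤ t) : (1 + t • K : Matrix (Fin n) (Fin n) ℝ).PosDef := by
  refine Matrix.PosDef.of_dotProduct_mulVec_pos ?_ ?_
  · simp only [Matrix.IsHermitian, conjTranspose_add, conjTranspose_smul, star_trivial]
    rw [show (1 : Matrix (Fin n) (Fin n) ℝ)ᴴ = 1 from conjTranspose_one]
    rw [show Kᴴ = K from hK.1]
  · intro x hx
    have h1 : (0:ℝ) < star x ⬝ᵥ (1 : Matrix (Fin n) (Fin n) ℝ) *ᵥ x := by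
      simp only [one_mulVec, star_trivial]
      have := Matrix.PosDef.one (n := Fin n) (R := ℝ)
      simpa using this.dotProduct_mulVec_pos hx
    have h2 : (0:ℝ) ≤ star x ⬝ᵥ (t • K) *ᵥ x := by
      rw [smul_mulVec, dotProduct_smul]
      exact mul_nonneg ht (by simpa using hK.dotProduct_mulVec_nonneg x)
    calc (0:ℝ) < star x ⬝ᵥ (1 : Matrix (Fin n) (Fin n) ℝ) *ᵥ x + star x ⬝ᵥ (t • K) *ᵥ x :=
          lt_add_of_lt_of_nonneg h1 h2
      _ = star x ⬝ᵥ (1 + t • K) *ᵥ x := by rw [add_mulVec, dotProduct_add]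

theorem stmt_11 (n : ℕ) (K : Matrix (Fin n) (Fin n) ℝ) (hK : K.PosSemidef)
    (hdiag : ∀ i, K i i = 1) (σ2 : ℝ) (hσ : 0 < σ2) (i : Fin n) :
    Filter.Tendsto
      (fun τ2 : ℝ =>
        (σ2 * (τ2 - τ2 ^ 2 * ((Pi.single i 1 : Fin n → ℝ) ⬝ᵥ
              (K + τ2 • (1 : Matrix (Fin n) (Fin n) ℝ))⁻¹.mulVec (Pi.single i 1)) +
            τ2 ^ 2 * ((Pi.single i 1 : Fin n → ℝ) ⬝ᵥ
                (K + τ2 • (1 : Matrix (Fin n) (Fin n) ℝ))⁻¹.mulVec (fun _ => 1)) ^ 2 /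
              ((fun _ => (1 : ℝ)) ⬝ᵥ
                (K + τ2 • (1 : Matrix (Fin n) (Fin n) ℝ))⁻¹.mulVec (fun _ => 1)))) /
          (σ2 * τ2))
      Filter.atTop (nhds (1 / n)) := by
  set e : Fin n → ℝ := Pi.single i 1 with he
  set o : Fin n → ℝ := fun _ => 1 with ho
  set M : ℝ → Matrix (Fin n) (Fin n) ℝ := fun t => (1 + t • K) with hM
  set g : ℝ → ℝ := fun t =>
    1 - (e ⬝ᵥ (M t)⁻¹.mulVec e) + (e ⬝ᵥ (M t)⁻¹.mulVec o) ^ 2 / (o ⬝ᵥ (M t)⁻¹.mulVec o)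
    with hg
  -- continuity of g at 0
  have hM0 : M 0 = 1 := by simp [hM]
  have hMinv0 : (M 0)⁻¹ = 1 := by rw [hM0, inv_one]
  have hMcont : ContinuousAt M 0 := by
    apply ContinuousAt.add continuousAt_const
    exact (continuous_id.smul continuous_const).continuousAt
  have hdet1 : IsUnit (M 0).det := by simp [hM0]
  have hinvcont : ContinuousAt (fun t => (M t)⁻¹) 0 := by
    refine ContinuousAt.comp ?_ hMcont
    apply continuousAt_matrix_inv
    rcases hdet1 with ⟨u, hu⟩
    rw [← hu]
    exact NormedRing.inverse_continuousAt u
  have hdotcont : ∀ v w : Fin n → ℝ,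
      ContinuousAt (fun t => v ⬝ᵥ (M t)⁻¹.mulVec w) 0 := by
    intro v w
    exact (continuous_const.dotProduct (continuous_id.matrix_mulVec
      continuous_const)).continuousAt.comp hinvcont
  have hee : e ⬝ᵥ (1 : Matrix (Fin n) (Fin n) ℝ).mulVec e = 1 := by
    simp [he, one_mulVec, single_dotProduct]
  have heo : e ⬝ᵥ (1 : Matrix (Fin n) (Fin n) ℝ).mulVec o = 1 := by
    simp [he, ho, one_mulVec, single_dotProduct]
  have hoo : o ⬝ᵥ (1 : Matrix (Fin n) (Fin n) ℝ).mulVec o = n := by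
    simp [ho, one_mulVec, dotProduct]
  have hn : (0:ℝ) < n := by
    have : 0 < n := Fin.pos i
    exact_mod_cast this
  have hgcont : ContinuousAt g 0 := by
    refine ((continuousAt_const.sub (hdotcont e e)).add ?_)
    refine ContinuousAt.div ((hdotcont e o).pow 2) (hdotcont o o) ?_
    rw [hMinv0, hoo]
    exact hn.ne'
  have hg0 : g 0 = 1 / n := by
    simp only [hg, hMinv0, hee, heo, hoo]
    ring
  -- the composed limit
  have hcomp : Filter.Tendsto (fun τ2 : ℝ => g τ2⁻¹) Filter.atTop (nhds (1 / n)) := by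
    rw [← hg0]
    exact hgcont.tendsto.comp tendsto_inv_atTop_zero
  refine Filter.Tendsto.congr' ?_ hcomp
  filter_upwards [Filter.eventually_gt_atTop (0:ℝ)] with τ2 hτ
  -- show g τ2⁻¹ equals the big expression
  have htinv : (0:ℝ) ≤ τ2⁻¹ := le_of_lt (inv_pos.mpr hτ)
  have hPD : (M τ2⁻¹).PosDef := aux_posdef hK htinv
  have hMd : IsUnit (M τ2⁻¹).det := isUnit_iff_ne_zero.mpr hPD.det_pos.ne'
  have hkey : (K + τ2 • (1 : Matrix (Fin n) (Fin n) ℝ))⁻¹ = τ2⁻¹ • (M τ2⁻¹)⁻¹ := by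
    apply inv_eq_right_inv
    have h1 : K + τ2 • (1 : Matrix (Fin n) (Fin n) ℝ) = τ2 • M τ2⁻¹ := by
      simp only [hM, smul_add, smul_smul, mul_inv_cancel₀ hτ.ne', one_smul]
      abel
    rw [h1, Matrix.smul_mul, Matrix.mul_smul, Matrix.mul_nonsing_inv _ hMd, smul_smul,
      mul_inv_cancel₀ hτ.ne', one_smul]
  have hsmul : ∀ v w : Fin n → ℝ,
      v ⬝ᵥ (τ2⁻¹ • (M τ2⁻¹)⁻¹).mulVec w = τ2⁻¹ * (v ⬝ᵥ (M τ2⁻¹)⁻¹.mulVec w) := by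
    intro v w
    rw [smul_mulVec, dotProduct_smul, smul_eq_mul]
  have hc : (0:ℝ) < o ⬝ᵥ (M τ2⁻¹)⁻¹.mulVec o := by
    have ho0 : o ≠ 0 := by
      intro h
      have := congrFun h i
      simp [ho] at this
    have := hPD.inv.dotProduct_mulVec_pos ho0
    simpa using this
  simp only [hkey, hsmul, hg]
  rw [eq_div_iff (by positivity : σ2 * τ2 ≠ 0)]
  field_simp
end
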